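/- Let G ≤ U_d be the group of d×d signed permutation matrices with uniform probability measure. Then for all 0 ≤ k ≤ d and all p : [k] → [d], the sum over σ ∈ S_k of sgn(σ) times the expectation over U = (u_{ij}) ∈ G of ∏_{i=1}^k u_{i p(i)} u_{σ(i) p(i)} equals (d-k)!/d! if p is injective, and 0 otherwise. -/

import Mathlib

open Finset

/-- The signed permutation matrix `D·P` with signs `ε` (true = `1`, false = `-1`) and
permutation `τ`. -/
def signedPermMatrix {d : ℕ} (ε : Fin d → Bool) (τ : Equiv.Perm (Fin d)) :
    Matrix (Fin d) (Fin d) ℝ :=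
  fun i j => if i = τ j then (if ε i then (1 : ℝ) else -1) else 0

lemma card_extending {d k : ℕ} (hk : k ≤ d) (p : Fin k → Fin d) (hp : Function.Injective p) :
    Fintype.card {τ : Equiv.Perm (Fin d) // ∀ i, τ (p i) = Fin.castLE hk i} =
      Nat.factorial (d - k) := by
  classical
  set q : Fin k → Fin d := Fin.castLE hk with hqdef
  have hqi : Function.Injective q := Fin.castLE_injective hk
  let onR : {x : Fin d // x ∈ Set.range p} ≃ {x : Fin d // x ∈ Set.range q} :=
    (Equiv.ofInjective p hp).symm.trans (Equiv.ofInjective q hqi)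
  have honR : ∀ i : Fin k, ∀ h, (onR ⟨p i, h⟩ : Fin d) = q i := by
    intro i h
    show (Equiv.ofInjective q hqi ((Equiv.ofInjective p hp).symm ⟨p i, h⟩) : Fin d) = q i
    have e1 : (Equiv.ofInjective p hp).symm ⟨p i, h⟩ = i := by
      rw [Equiv.symm_apply_eq]; exact Subtype.ext rfl
    rw [e1]; rfl
  let Ψ : ({x : Fin d // x ∉ Set.range p} ≃ {x : Fin d // x ∉ Set.range q}) →
      Equiv.Perm (Fin d) := fun f =>
    (Equiv.sumCompl (· ∈ Set.range p)).symm.trans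
      ((Equiv.sumCongr onR f).trans (Equiv.sumCompl (· ∈ Set.range q)))
  have hΨp : ∀ f, ∀ i : Fin k, Ψ f (p i) = q i := by
    intro f i
    have h : p i ∈ Set.range p := ⟨i, rfl⟩
    simp only [Ψ, Equiv.trans_apply, Equiv.sumCompl_symm_apply_of_pos (p := (· ∈ Set.range p)) h,
      Equiv.sumCongr_apply, Sum.map_inl, Equiv.sumCompl_apply_inl]
    exact honR i h
  have hΨc : ∀ f, ∀ x : Fin d, ∀ h : x ∉ Set.range p, Ψ f x = (f ⟨x, h⟩ : Fin d) := by
    intro f x h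
    simp only [Ψ, Equiv.trans_apply, Equiv.sumCompl_symm_apply_of_neg (p := (· ∈ Set.range p)) h,
      Equiv.sumCongr_apply, Sum.map_inr, Equiv.sumCompl_apply_inr]
  let Ψ' : ({x : Fin d // x ∉ Set.range p} ≃ {x : Fin d // x ∉ Set.range q}) →
      {τ : Equiv.Perm (Fin d) // ∀ i, τ (p i) = q i} := fun f => ⟨Ψ f, hΨp f⟩
  have hbij : Function.Bijective Ψ' := by
    constructor
    · intro f g hfg
      ext x
      have h0 := congrArg Subtype.val hfg
      have this := congrArg (fun τ : Equiv.Perm (Fin d) => τ (x : Fin d)) h0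
      simp only [Ψ'] at this
      rw [hΨc f x x.2, hΨc g x x.2] at this
      simp only [Subtype.coe_eta] at this
      exact congrArg Fin.val this
    · rintro ⟨τ, hτ⟩
      have hmem : ∀ x : Fin d, x ∉ Set.range p ↔ τ x ∉ Set.range q := by
        intro x
        constructor
        · intro hx hc
          obtain ⟨i, hi⟩ := hc
          exact hx ⟨i, τ.injective (by rw [hτ i, hi])⟩
        · intro hx hc
          obtain ⟨i, hi⟩ := hc
          exact hx ⟨i, by rw [← hi, hτ i]⟩
      refine ⟨(τ.subtypeEquiv hmem : _), ?_⟩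
      apply Subtype.ext
      ext x
      by_cases hx : x ∈ Set.range p
      · obtain ⟨i, rfl⟩ := hx
        rw [hΨp, hτ]
      · rw [hΨc _ x hx]
        rfl
  have hcard1 : Fintype.card {x : Fin d // x ∈ Set.range p} = k := by
    rw [Fintype.card_congr (Equiv.ofInjective p hp).symm, Fintype.card_fin]
  have hcard : Fintype.card {x : Fin d // x ∉ Set.range p} = d - k := by
    have := Fintype.card_subtype_compl (fun x : Fin d => x ∈ Set.range p)
    simp only [hcard1, Fintype.card_fin] at this
    exact this
  have hcard2 : Fintype.card {x : Fin d // x ∉ Set.range q} = d - k := by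
    have h1 : Fintype.card {x : Fin d // x ∈ Set.range q} = k := by
      rw [Fintype.card_congr (Equiv.ofInjective q hqi).symm, Fintype.card_fin]
    have := Fintype.card_subtype_compl (fun x : Fin d => x ∈ Set.range q)
    simp only [h1, Fintype.card_fin] at this
    exact this
  rw [← Fintype.card_of_bijective hbij,
    Fintype.card_equiv (Fintype.equivOfCardEq (hcard.trans hcard2.symm)), hcard]

/-- The group of `d × d` signed permutation matrices has the quadrature property. -/
theorem signedPerm_quadrature {d k : ℕ} (hk : k ≤ d) (p : Fin k → Fin d) :
    ∑ σ : Equiv.Perm (Fin k), (Equiv.Perm.sign σ : ℝ) *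
      ((2 ^ d * Nat.factorial d : ℝ)⁻¹ *
        ∑ ε : Fin d → Bool, ∑ τ : Equiv.Perm (Fin d),
          ∏ i : Fin k,
            signedPermMatrix ε τ (Fin.castLE hk i) (p i) *
              signedPermMatrix ε τ (Fin.castLE hk (σ i)) (p i))
      = if Function.Injective p then
          (Nat.factorial (d - k) : ℝ) / (Nat.factorial d : ℝ) else 0 := by
  classical
  rw [Finset.sum_eq_single (1 : Equiv.Perm (Fin k))]
  · -- the σ = 1 term
    simp only [map_one, Units.val_one, Int.cast_one, one_mul, Equiv.Perm.one_apply]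
    have hprod : ∀ (ε : Fin d → Bool) (τ : Equiv.Perm (Fin d)),
        ∏ i : Fin k, signedPermMatrix ε τ (Fin.castLE hk i) (p i) *
          signedPermMatrix ε τ (Fin.castLE hk i) (p i)
        = if ∀ i : Fin k, τ (p i) = Fin.castLE hk i then 1 else 0 := by
      intro ε τ
      have hfac : ∀ i : Fin k, signedPermMatrix ε τ (Fin.castLE hk i) (p i) *
          signedPermMatrix ε τ (Fin.castLE hk i) (p i)
          = if τ (p i) = Fin.castLE hk i then 1 else 0 := by
        intro i
        unfold signedPermMatrix
        rcases eq_or_ne (τ (p i)) (Fin.castLE hk i) with h | h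
        · rw [if_pos h.symm, if_pos h]
          cases hb : ε (Fin.castLE hk i) <;> simp [hb]
        · rw [if_neg (fun hh => h hh.symm), if_neg h, mul_zero]
      simp only [hfac]
      by_cases h : ∀ i : Fin k, τ (p i) = Fin.castLE hk i
      · simp [h]
      · rw [if_neg h]
        push_neg at h
        obtain ⟨i, hi⟩ := h
        exact Finset.prod_eq_zero (Finset.mem_univ i) (by simp [hi])
    simp only [hprod]
    have hsum : ∑ τ : Equiv.Perm (Fin d),
        (if ∀ i : Fin k, τ (p i) = Fin.castLE hk i then (1:ℝ) else 0)
        = (Fintype.card {τ : Equiv.Perm (Fin d) // ∀ i, τ (p i) = Fin.castLE hk i} : ℝ) := by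
      rw [Fintype.card_subtype]
      exact Finset.sum_boole _ _
    simp only [hsum, Finset.sum_const, Finset.card_univ, nsmul_eq_mul]
    have hcardfun : (Fintype.card (Fin d → Bool) : ℝ) = 2 ^ d := by
      simp [Fintype.card_fun]
    rw [hcardfun]
    have h2 : (2 : ℝ) ^ d ≠ 0 := by positivity
    have hd : (Nat.factorial d : ℝ) ≠ 0 := by
      exact_mod_cast (Nat.factorial_pos d).ne'
    by_cases hp : Function.Injective p
    · rw [if_pos hp, card_extending hk p hp]
      field_simp
    · rw [if_neg hp]
      have : Fintype.card {τ : Equiv.Perm (Fin d) // ∀ i, τ (p i) = Fin.castLE hk i} = 0 := by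
        rw [Fintype.card_eq_zero_iff]
        refine ⟨fun ⟨τ, hτ⟩ => hp fun i j hij => ?_⟩
        have : Fin.castLE hk i = Fin.castLE hk j := by rw [← hτ i, ← hτ j, hij]
        exact Fin.castLE_injective hk this
      rw [this]
      simp
  · -- other σ contribute 0
    intro σ _ hσ
    have hex : ∃ i, σ i ≠ i := by
      by_contra h
      push_neg at h
      exact hσ (Equiv.ext h)
    obtain ⟨i, hi⟩ := hex
    have hz : ∀ (ε : Fin d → Bool) (τ : Equiv.Perm (Fin d)),
        ∏ j : Fin k, signedPermMatrix ε τ (Fin.castLE hk j) (p j) *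
          signedPermMatrix ε τ (Fin.castLE hk (σ j)) (p j) = 0 := by
      intro ε τ
      apply Finset.prod_eq_zero (Finset.mem_univ i)
      unfold signedPermMatrix
      by_cases h1 : Fin.castLE hk i = τ (p i)
      · have h2 : ¬ (Fin.castLE hk (σ i) = τ (p i)) := fun h2 =>
          hi (Fin.castLE_injective hk (h2.trans h1.symm))
        rw [if_neg h2, mul_zero]
      · rw [if_neg h1, zero_mul]
    simp [hz]
  · intro h
    exact absurd (Finset.mem_univ _) h
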